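/- Let E be a complex Banach space, let S > 1 be a real number, and let f : ℂ → E be analytic at every point of the punctured disc A = {z ∈ ℂ : 0 < |z| < S}. Fix t ∈ (0,1) and for each k ∈ ℤ set c_k := (2πi)⁻¹ ∮_{|z|=t} z^{−k−1} f(z) dz. Then the family (c_k)_{k ∈ ℤ} is absolutely summable (Σ_{k∈ℤ} ‖c_k‖ < ∞) and Σ_{k∈ℤ} c_k = f(1); that is, the Laurent expansion of f, with coefficients computed on the circle of radius t, converges absolutely at the point 1 with sum f(1). -/

import Mathlib

open Complex Metric Set

lemma hasSum_neg_part {E : Type*} [NormedAddCommGroup E] [NormedSpace ℂ E]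
    {f : ℂ → E} {t : ℝ} (ht0 : 0 < t) (ht1 : t < 1)
    (hf : CircleIntegrable f 0 t) :
    HasSum (fun n : ℕ => ∮ z in C(0, t), z ^ n • f z)
      (∮ z in C(0, t), (1 - z)⁻¹ • f z) := by
  simp only [circleIntegral]
  refine intervalIntegral.hasSum_integral_of_dominated_convergence
      (fun n θ => ‖f (circleMap 0 t θ)‖ * (t * t ^ n)) (fun n => ?_) (fun n => ?_) ?_ ?_ ?_
  · apply_rules [MeasureTheory.AEStronglyMeasurable.smul, hf.def'.1] <;>
      apply Measurable.aestronglyMeasurable <;> fun_prop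
  · refine Filter.Eventually.of_forall fun θ _ => ?_
    have habs : ‖circleMap 0 t θ‖ = t := by
      simp [norm_circleMap_zero, abs_of_pos ht0]
    simp only [norm_smul, deriv_circleMap, norm_mul, habs,
      Complex.norm_I, mul_one, norm_pow]
    ring_nf
    exact le_refl _
  · exact Filter.Eventually.of_forall fun _ _ =>
      (((summable_geometric_of_lt_one ht0.le ht1).mul_left _).mul_left _)
  · simpa only [tsum_mul_left, tsum_geometric_of_lt_one ht0.le ht1] using
      hf.norm.mul_continuousOn continuousOn_const
  · refine Filter.Eventually.of_forall fun θ _ => HasSum.const_smul _ ?_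
    have hn : ‖circleMap 0 t θ‖ < 1 := by
      simp [norm_circleMap_zero, abs_of_pos ht0, ht1]
    exact (hasSum_geometric_of_norm_lt_one hn).smul_const _

/-- If `f : ℂ → E` is analytic on the punctured disc `{z : 0 < |z| < S}` with `S > 1`,
then its Laurent coefficients `c_k = (2πi)⁻¹ ∮_{|z|=t} z^{-k-1} f(z) dz` (computed on a
circle of radius `t ∈ (0,1)`) are absolutely summable over `k ∈ ℤ`, with sum `f 1`. -/
theorem stmt_11 {E : Type*} [NormedAddCommGroup E] [NormedSpace ℂ E] [CompleteSpace E]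
    (S : ℝ) (hS : 1 < S) (f : ℂ → E)
    (hf : ∀ z : ℂ, 0 < ‖z‖ → ‖z‖ < S → AnalyticAt ℂ f z)
    (t : ℝ) (ht : t ∈ Set.Ioo (0 : ℝ) 1) :
    Summable (fun k : ℤ =>
        ‖(2 * (Real.pi : ℂ) * Complex.I)⁻¹ • (∮ z in C(0, t), z ^ (-k - 1) • f z)‖) ∧
      HasSum (fun k : ℤ =>
        (2 * (Real.pi : ℂ) * Complex.I)⁻¹ • (∮ z in C(0, t), z ^ (-k - 1) • f z)) (f 1) := by
  obtain ⟨ht0, ht1⟩ := ht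
  obtain ⟨r, hr1, hrS⟩ : ∃ r : ℝ, 1 < r ∧ r < S := ⟨(1 + S) / 2, by linarith, by linarith⟩
  have hr0 : 0 < r := by linarith
  have htr : t < r := by linarith
  -- basic differentiability / continuity facts
  have hfd : ∀ z : ℂ, 0 < ‖z‖ → ‖z‖ < S → DifferentiableAt ℂ f z :=
    fun z h1 h2 => (hf z h1 h2).differentiableAt
  have hcont : ∀ ρ : ℝ, 0 < ρ → ρ < S → ContinuousOn f (sphere (0 : ℂ) ρ) := by
    intro ρ h1 h2 z hz
    have hza : ‖z‖ = ρ := by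
      simpa using mem_sphere_zero_iff_norm.mp hz
    exact ((hfd z (by rw [hza]; exact h1) (by rw [hza]; exact h2)).continuousAt).continuousWithinAt
  have hint_t : CircleIntegrable f 0 t := (hcont t ht0 (ht1.trans hS)).circleIntegrable ht0.le
  have hint_r : CircleIntegrable f 0 r := (hcont r hr0 hrS).circleIntegrable hr0.le
  -- differentiability of the integrands on the punctured disc
  have hgd : ∀ (m : ℤ) (z : ℂ), 0 < ‖z‖ → ‖z‖ < S →
      DifferentiableAt ℂ (fun w : ℂ => w ^ m • f w) z := by
    intro m z h1 h2
    have hz0 : z ≠ 0 := by intro h; rw [h] at h1; simp at h1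
    exact (differentiableAt_zpow.mpr (Or.inl hz0)).smul (hfd z h1 h2)
  -- the coefficients do not depend on the radius
  have hind : ∀ m : ℤ, (∮ z in C(0, t), z ^ m • f z) = ∮ z in C(0, r), z ^ m • f z := by
    intro m
    refine (circleIntegral_eq_of_differentiable_on_annulus_off_countable ht0 htr.le
      Set.countable_empty ?_ ?_).symm
    · rintro z ⟨h1, h2⟩
      rw [mem_closedBall_zero_iff] at h1
      rw [mem_ball_zero_iff, not_lt] at h2
      exact ((hgd m z (lt_of_lt_of_le ht0 h2) (lt_of_le_of_lt h1 hrS)).continuousAt).continuousWithinAt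
    · rintro z ⟨⟨h1, h2⟩, -⟩
      rw [mem_ball_zero_iff] at h1
      rw [mem_closedBall_zero_iff, not_le] at h2
      exact hgd m z (ht0.trans h2) (h1.trans hrS)
  -- Cauchy's formula on the annulus, at the point 1
  have h1r : (1 : ℂ) ∈ ball (0 : ℂ) r := by
    rw [mem_ball_zero_iff]; simpa using hr1
  have key : (∮ z in C(0, r), (z - 1)⁻¹ • f z) - (∮ z in C(0, t), (z - 1)⁻¹ • f z)
      = (2 * (Real.pi : ℂ) * Complex.I) • f 1 := by
    have hds : (∮ z in C(0, r), dslope f 1 z) = ∮ z in C(0, t), dslope f 1 z := by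
      refine circleIntegral_eq_of_differentiable_on_annulus_off_countable ht0 htr.le
        (Set.countable_singleton 1) ?_ ?_
      · rintro z ⟨h1, h2⟩
        rw [mem_closedBall_zero_iff] at h1
        rw [mem_ball_zero_iff, not_lt] at h2
        rcases eq_or_ne z 1 with rfl | hz1
        · exact (continuousAt_dslope_same.2 (hfd 1 (by simp) (by simpa using hS))).continuousWithinAt
        · exact ((continuousAt_dslope_of_ne hz1).2
            ((hfd z (lt_of_lt_of_le ht0 h2) (lt_of_le_of_lt h1 hrS)).continuousAt)).continuousWithinAt
      · rintro z ⟨⟨h1, h2⟩, hz1⟩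
        rw [mem_ball_zero_iff] at h1
        rw [mem_closedBall_zero_iff, not_le] at h2
        rw [Set.mem_singleton_iff] at hz1
        exact (differentiableAt_dslope_of_ne hz1).2 (hfd z (ht0.trans h2) (h1.trans hrS))
    have hexp : ∀ ρ : ℝ, 0 < ρ → ρ ≠ 1 → ρ < S →
        (∮ z in C(0, ρ), dslope f 1 z)
          = (∮ z in C(0, ρ), (z - 1)⁻¹ • f z) - (∮ z in C(0, ρ), (z - 1)⁻¹) • f 1 := by
      intro ρ hρ0 hρ1 hρS
      have hne : ∀ z ∈ sphere (0 : ℂ) ρ, z ≠ 1 := by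
        intro z hz
        rw [mem_sphere_zero_iff_norm] at hz
        intro h; rw [h] at hz; simp at hz; exact hρ1 hz.symm
      have hcongr : (∮ z in C(0, ρ), dslope f 1 z)
          = ∮ z in C(0, ρ), ((z - 1)⁻¹ • f z - (z - 1)⁻¹ • f 1) := by
        refine circleIntegral.integral_congr hρ0.le fun z hz => ?_
        rw [dslope_of_ne f (hne z hz), slope_def_module, smul_sub]
      rw [hcongr, ← circleIntegral.integral_smul_const]
      refine circleIntegral.integral_sub ?_ ?_
      · refine ContinuousOn.circleIntegrable hρ0.le ?_
        intro z hz
        have hz1 := hne z hz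
        have hza : ‖z‖ = ρ := by
          simpa using mem_sphere_zero_iff_norm.mp hz
        exact (((continuousAt_id.sub continuousAt_const).inv₀ (sub_ne_zero.2 hz1)).smul
          ((hfd z (by rw [hza]; exact hρ0) (by rw [hza]; exact hρS)).continuousAt)).continuousWithinAt
      · refine ContinuousOn.circleIntegrable hρ0.le ?_
        intro z hz
        exact (((continuousAt_id.sub continuousAt_const).inv₀
          (sub_ne_zero.2 (hne z hz))).smul continuousAt_const).continuousWithinAt
    have hR := hexp r hr0 hr1.ne' hrS
    have hT := hexp t ht0 ht1.ne (ht1.trans hS)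
    have hir : (∮ z in C(0, r), (z - 1)⁻¹) = 2 * (Real.pi : ℂ) * Complex.I :=
      circleIntegral.integral_sub_inv_of_mem_ball h1r
    have hit : (∮ z in C(0, t), (z - 1)⁻¹) = 0 := by
      refine circleIntegral_eq_zero_of_differentiable_on_off_countable ht0.le
        Set.countable_empty ?_ ?_
      · intro z hz
        rw [mem_closedBall_zero_iff] at hz
        have hz1 : z ≠ 1 := by intro h; rw [h] at hz; simp at hz; linarith
        exact ((continuousAt_id.sub continuousAt_const).inv₀ (sub_ne_zero.2 hz1)).continuousWithinAt
      · rintro z ⟨hz, -⟩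
        rw [mem_ball_zero_iff] at hz
        have hz1 : z ≠ 1 := by intro h; rw [h] at hz; simp at hz; linarith
        exact (differentiableAt_id.sub (differentiableAt_const 1)).inv (sub_ne_zero.2 hz1)
    rw [hR, hT, hir, hit, zero_smul, sub_zero] at hds
    linear_combination (norm := module) hds
  -- positive part
  have hpos : HasSum (fun n : ℕ => (2 * (Real.pi : ℂ) * Complex.I)⁻¹ •
      (∮ z in C(0, t), z ^ (-(n : ℤ) - 1) • f z))
      ((2 * (Real.pi : ℂ) * Complex.I)⁻¹ • ∮ z in C(0, r), (z - 1)⁻¹ • f z) := by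
    have h0 := hasSum_two_pi_I_cauchyPowerSeries_integral (w := (1 : ℂ)) hint_r
      (by simpa using hr1)
    have heq : ∀ n : ℕ, (∮ z in C(0, r), ((1 : ℂ) / (z - 0)) ^ n • (z - 0)⁻¹ • f z)
        = ∮ z in C(0, r), z ^ (-(n : ℤ) - 1) • f z := by
      intro n
      refine circleIntegral.integral_congr hr0.le fun z hz => ?_
      rw [mem_sphere_zero_iff_norm] at hz
      have hz0 : z ≠ 0 := by intro h; rw [h] at hz; simp at hz; linarith
      rw [sub_zero, smul_smul, sub_eq_add_neg, zpow_add₀ hz0, zpow_neg, zpow_natCast,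
        zpow_neg_one, one_div, inv_pow]
    rw [show (0 : ℂ) + 1 = 1 by ring] at h0
    simp only [heq] at h0
    simp only [hind]
    exact h0.const_smul _
  -- negative part
  have hneg : HasSum (fun n : ℕ => (2 * (Real.pi : ℂ) * Complex.I)⁻¹ •
      (∮ z in C(0, t), z ^ (-(-((n : ℤ) + 1)) - 1) • f z))
      ((2 * (Real.pi : ℂ) * Complex.I)⁻¹ • -∮ z in C(0, t), (z - 1)⁻¹ • f z) := by
    have h0 := hasSum_neg_part ht0 ht1 hint_t
    have hrw : (∮ z in C(0, t), (1 - z)⁻¹ • f z) = -∮ z in C(0, t), (z - 1)⁻¹ • f z := by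
      have : ∀ z : ℂ, (1 - z)⁻¹ • f z = -((z - 1)⁻¹ • f z) := by
        intro z
        rw [show (1 : ℂ) - z = -(z - 1) by ring, inv_neg, neg_smul]
      simp only [this, circleIntegral, smul_neg, intervalIntegral.integral_neg]
    have hidx : ∀ n : ℕ, (fun z : ℂ => z ^ (-(-((n : ℤ) + 1)) - 1) • f z)
        = fun z : ℂ => z ^ n • f z := by
      intro n
      funext z
      rw [show -(-((n : ℤ) + 1)) - 1 = (n : ℤ) by ring, zpow_natCast]
    rw [hrw] at h0
    simp only [hidx]
    exact h0.const_smul _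
  constructor
  · -- summability of norms
    obtain ⟨Mr, hMr⟩ := (isCompact_sphere (0 : ℂ) r).exists_bound_of_continuousOn (hcont r hr0 hrS)
    obtain ⟨Mt, hMt⟩ := (isCompact_sphere (0 : ℂ) t).exists_bound_of_continuousOn
      (hcont t ht0 (ht1.trans hS))
    have hMr' : ∀ x ∈ sphere (0 : ℂ) r, ‖f x‖ ≤ max Mr 0 :=
      fun x hx => le_trans (hMr x hx) (le_max_left _ _)
    have hMt' : ∀ x ∈ sphere (0 : ℂ) t, ‖f x‖ ≤ max Mt 0 :=
      fun x hx => le_trans (hMt x hx) (le_max_left _ _)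
    set Mr' : ℝ := max Mr 0 with hMr'def
    set Mt' : ℝ := max Mt 0 with hMt'def
    have h2pi : ‖(2 * (Real.pi : ℂ) * Complex.I)⁻¹‖ = (2 * Real.pi)⁻¹ := by
      simp [norm_inv, abs_of_pos Real.pi_pos]
    refine Summable.of_nat_of_neg_add_one (f := fun k : ℤ =>
      ‖(2 * (Real.pi : ℂ) * Complex.I)⁻¹ • (∮ z in C(0, t), z ^ (-k - 1) • f z)‖) ?_ ?_
    · -- k = n ≥ 0
      have hgeom : Summable fun n : ℕ => ((2 * Real.pi)⁻¹ * (2 * Real.pi * Mr')) * r⁻¹ ^ n :=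
        (summable_geometric_of_lt_one (by positivity) (inv_lt_one_of_one_lt₀ hr1)).mul_left _
      refine Summable.of_nonneg_of_le (fun n => norm_nonneg _) (fun n => ?_) hgeom
      beta_reduce
      rw [hind, norm_smul, h2pi]
      have hb : ‖∮ z in C(0, r), z ^ (-(n : ℤ) - 1) • f z‖
          ≤ 2 * Real.pi * r * (r ^ (-(n : ℤ) - 1) * Mr') := by
        refine circleIntegral.norm_integral_le_of_norm_le_const hr0.le fun z hz => ?_
        have hzr : ‖z‖ = r := by
          simpa using mem_sphere_zero_iff_norm.mp hz
        rw [norm_smul, norm_zpow, hzr]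
        exact mul_le_mul_of_nonneg_left (le_trans (hMr z hz) (le_max_left _ _))
          (zpow_nonneg hr0.le _)
      calc (2 * Real.pi)⁻¹ * ‖∮ z in C(0, r), z ^ (-(n : ℤ) - 1) • f z‖
          ≤ (2 * Real.pi)⁻¹ * (2 * Real.pi * r * (r ^ (-(n : ℤ) - 1) * Mr')) :=
            mul_le_mul_of_nonneg_left hb (by positivity)
        _ = (2 * Real.pi)⁻¹ * (2 * Real.pi * Mr') * r⁻¹ ^ n := by
            rw [sub_eq_add_neg, zpow_add₀ hr0.ne', zpow_neg, zpow_natCast, zpow_neg_one,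
              inv_pow, show 2 * Real.pi * r * ((r ^ n)⁻¹ * r⁻¹ * Mr')
                = 2 * Real.pi * Mr' * (r ^ n)⁻¹ * (r * r⁻¹) by ring,
              mul_inv_cancel₀ hr0.ne', mul_one]
            ring
    · -- k = -(n+1)
      have hgeom : Summable fun n : ℕ => ((2 * Real.pi)⁻¹ * (2 * Real.pi * t * Mt')) * t ^ n :=
        (summable_geometric_of_lt_one ht0.le ht1).mul_left _
      refine Summable.of_nonneg_of_le (fun n => norm_nonneg _) (fun n => ?_) hgeom
      have hidx : (-(-((n : ℤ) + 1)) - 1) = (n : ℤ) := by ring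
      beta_reduce
      rw [hidx, norm_smul, h2pi]
      have hb : ‖∮ z in C(0, t), z ^ (n : ℤ) • f z‖
          ≤ 2 * Real.pi * t * (t ^ (n : ℤ) * Mt') := by
        refine circleIntegral.norm_integral_le_of_norm_le_const ht0.le fun z hz => ?_
        have hzt : ‖z‖ = t := by
          simpa using mem_sphere_zero_iff_norm.mp hz
        rw [norm_smul, norm_zpow, hzt]
        exact mul_le_mul_of_nonneg_left (le_trans (hMt z hz) (le_max_left _ _))
          (zpow_nonneg ht0.le _)
      calc (2 * Real.pi)⁻¹ * ‖∮ z in C(0, t), z ^ (n : ℤ) • f z‖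
          ≤ (2 * Real.pi)⁻¹ * (2 * Real.pi * t * (t ^ (n : ℤ) * Mt')) :=
            mul_le_mul_of_nonneg_left hb (by positivity)
        _ = (2 * Real.pi)⁻¹ * (2 * Real.pi * t * Mt') * t ^ n := by
            rw [zpow_natCast]; ring
  · -- the sum
    have htotal := HasSum.of_nat_of_neg_add_one (f := fun k : ℤ =>
      (2 * (Real.pi : ℂ) * Complex.I)⁻¹ • (∮ z in C(0, t), z ^ (-k - 1) • f z)) hpos hneg
    have hsum : ((2 * (Real.pi : ℂ) * Complex.I)⁻¹ • ∮ z in C(0, r), (z - 1)⁻¹ • f z)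
        + ((2 * (Real.pi : ℂ) * Complex.I)⁻¹ • -∮ z in C(0, t), (z - 1)⁻¹ • f z) = f 1 := by
      rw [← smul_add, ← sub_eq_add_neg, key, inv_smul_smul₀ Complex.two_pi_I_ne_zero]
    rwa [hsum] at htotal
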